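/- For every real x, the matrices M(x + 1/2) and N(x + 1/2) are invertible with inverses [M(x + 1/2)]^{−1} = 𝓓·P[−x]·𝓕 and [N(x + 1/2)]^{−1} = 𝓕·𝓓·P[−x]. In particular, M(0)^{−1} = 𝓓·P[1/2]·𝓕, N(0)^{−1} = 𝓕·𝓓·P[1/2], [M(1/2)]^{−1} = 𝓓·𝓕, and [N(1/2)]^{−1} = 𝓕·𝓓. -/

import Mathlib

noncomputable section

/-- `Eu x k` is the Euler polynomial `E_k(x)`, characterized by the generating function
`(2/(e^z+1)) e^{xz} = Σ_k E_k(x) z^k / k!` for `|z| < π`. -/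
def IsEulerFamily (Eu : ℝ → ℕ → ℝ) : Prop :=
  ∀ x z : ℝ, |z| < Real.pi →
    HasSum (fun k : ℕ => Eu x k * z ^ k / (Nat.factorial k : ℝ))
      (2 / (Real.exp z + 1) * Real.exp (x * z))

/-- The `(n+1)×(n+1)` Euler polynomial matrix `𝓔(x)`, with `(i,j)` entry
`C(i,j) E_{i-j}(x)` (which is `0` for `j > i` since then `C(i,j) = 0`). -/
def eulerMatrix (Eu : ℝ → ℕ → ℝ) (n : ℕ) (x : ℝ) :
    Matrix (Fin (n + 1)) (Fin (n + 1)) ℝ :=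
  Matrix.of fun i j => (Nat.choose (i : ℕ) (j : ℕ) : ℝ) * Eu x ((i : ℕ) - (j : ℕ))

/-- The generalized Pascal matrix of the first kind `P[x]`. -/
def pascalMatrix (n : ℕ) (x : ℝ) : Matrix (Fin (n + 1)) (Fin (n + 1)) ℝ :=
  Matrix.of fun i j => (Nat.choose (i : ℕ) (j : ℕ) : ℝ) * x ^ ((i : ℕ) - (j : ℕ))

/-- The matrix `𝓓`, with `(i,j)` entry `(1+(-1)^(i-j)) C(i,j) 2^(j-i-1)`
(which is `0` for `j > i` since then `C(i,j) = 0`). -/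
def Dmatrix (n : ℕ) : Matrix (Fin (n + 1)) (Fin (n + 1)) ℝ :=
  Matrix.of fun i j =>
    (1 + (-1 : ℝ) ^ ((i : ℤ) - (j : ℤ))) * (Nat.choose (i : ℕ) (j : ℕ) : ℝ) *
      (2 : ℝ) ^ ((j : ℤ) - (i : ℤ) - 1)

/-- The `(n+1)×(n+1)` Fibonacci matrix `𝓕`, with `(i,j)` entry `F_{i-j+1}` for `i ≥ j`
and `0` otherwise. -/
def fibMatrix (n : ℕ) : Matrix (Fin (n + 1)) (Fin (n + 1)) ℝ :=
  Matrix.of fun i j =>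
    if (j : ℕ) ≤ (i : ℕ) then (Nat.fib ((i : ℕ) - (j : ℕ) + 1) : ℝ) else 0

/-- The matrix `M(x)`, with `(i,j)` entry
`C(i,j) E_{i-j}(x) - C(i-1,j) E_{i-j-1}(x) - C(i-2,j) E_{i-j-2}(x)`,
where a term is `0` whenever its binomial coefficient vanishes. -/
def Mmatrix (Eu : ℝ → ℕ → ℝ) (n : ℕ) (x : ℝ) :
    Matrix (Fin (n + 1)) (Fin (n + 1)) ℝ :=
  Matrix.of fun i j =>
    (Nat.choose (i : ℕ) (j : ℕ) : ℝ) * Eu x ((i : ℕ) - (j : ℕ))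
    - (if 1 ≤ (i : ℕ) then
        (Nat.choose ((i : ℕ) - 1) (j : ℕ) : ℝ) * Eu x ((i : ℕ) - 1 - (j : ℕ)) else 0)
    - (if 2 ≤ (i : ℕ) then
        (Nat.choose ((i : ℕ) - 2) (j : ℕ) : ℝ) * Eu x ((i : ℕ) - 2 - (j : ℕ)) else 0)

/-- The matrix `N(x)`, with `(i,j)` entry
`C(i,j) E_{i-j}(x) - C(i,j+1) E_{i-j-1}(x) - C(i,j+2) E_{i-j-2}(x)`,
where a term is `0` whenever its binomial coefficient vanishes. -/
def Nmatrix (Eu : ℝ → ℕ → ℝ) (n : ℕ) (x : ℝ) :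
    Matrix (Fin (n + 1)) (Fin (n + 1)) ℝ :=
  Matrix.of fun i j =>
    (Nat.choose (i : ℕ) (j : ℕ) : ℝ) * Eu x ((i : ℕ) - (j : ℕ))
    - (Nat.choose (i : ℕ) ((j : ℕ) + 1) : ℝ) * Eu x ((i : ℕ) - ((j : ℕ) + 1))
    - (Nat.choose (i : ℕ) ((j : ℕ) + 2) : ℝ) * Eu x ((i : ℕ) - ((j : ℕ) + 2))

open Finset

/-- binomial-Toeplitz matrix -/
def bmatAux (n : ℕ) (g : ℕ → ℝ) : Matrix (Fin (n + 1)) (Fin (n + 1)) ℝ :=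
  Matrix.of fun i j => (Nat.choose (i : ℕ) (j : ℕ) : ℝ) * g ((i : ℕ) - (j : ℕ))

/-- plain lower-Toeplitz matrix -/
def tmatAux (n : ℕ) (g : ℕ → ℝ) : Matrix (Fin (n + 1)) (Fin (n + 1)) ℝ :=
  Matrix.of fun i j => if (j : ℕ) ≤ (i : ℕ) then g ((i : ℕ) - (j : ℕ)) else 0

lemma bmatAux_mul (n : ℕ) (a b : ℕ → ℝ) :
    bmatAux n a * bmatAux n b
      = bmatAux n (fun s => ∑ t ∈ range (s + 1), (Nat.choose s t : ℝ) * a (s - t) * b t) := by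
  ext i j
  simp only [Matrix.mul_apply, bmatAux, Matrix.of_apply]
  rw [Fin.sum_univ_eq_sum_range
    (fun k => ((i : ℕ).choose k : ℝ) * a ((i : ℕ) - k) * ((k.choose (j : ℕ) : ℝ) * b (k - (j : ℕ))))]
  rcases le_or_gt (j : ℕ) (i : ℕ) with hji | hij
  · have h1 : ∑ k ∈ range (n + 1),
        ((i : ℕ).choose k : ℝ) * a ((i : ℕ) - k) * ((k.choose (j : ℕ) : ℝ) * b (k - (j : ℕ)))
        = ∑ k ∈ Ico (j : ℕ) ((i : ℕ) + 1),
        ((i : ℕ).choose k : ℝ) * a ((i : ℕ) - k) * ((k.choose (j : ℕ) : ℝ) * b (k - (j : ℕ))) := by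
      refine (Finset.sum_subset ?_ ?_).symm
      · intro k hk
        simp only [mem_Ico] at hk
        simp only [mem_range]
        omega
      · intro k hk hk'
        simp only [mem_range] at hk
        simp only [mem_Ico, not_and, not_lt] at hk'
        rcases le_or_gt k (i : ℕ) with h | h
        · have : k < (j : ℕ) := by by_contra h'; exact absurd (hk' (le_of_not_gt h')) (by omega)
          rw [Nat.choose_eq_zero_of_lt this]; simp
        · rw [Nat.choose_eq_zero_of_lt h]; simp
    rw [h1, Finset.sum_Ico_eq_sum_range]
    have h2 : (i : ℕ) + 1 - (j : ℕ) = (i : ℕ) - (j : ℕ) + 1 := by omega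
    rw [h2, Finset.mul_sum]
    refine Finset.sum_congr rfl fun t ht => ?_
    have ht' : t ≤ (i : ℕ) - (j : ℕ) := by simp only [mem_range] at ht; omega
    have hkn : (j : ℕ) + t ≤ (i : ℕ) := by omega
    have hcc := Nat.choose_mul (n := (i : ℕ)) (Nat.le_add_right (j : ℕ) t)
    have hcc' : ((i : ℕ).choose ((j : ℕ) + t) : ℝ) * (((j : ℕ) + t).choose (j : ℕ) : ℝ)
        = ((i : ℕ).choose (j : ℕ) : ℝ) * (((i : ℕ) - (j : ℕ)).choose (((j : ℕ) + t) - (j : ℕ)) : ℝ) := by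
      exact_mod_cast congrArg (Nat.cast (R := ℝ)) hcc
    have e1 : (j : ℕ) + t - (j : ℕ) = t := by omega
    have e2 : (i : ℕ) - ((j : ℕ) + t) = (i : ℕ) - (j : ℕ) - t := by omega
    rw [e1] at hcc'
    rw [e2, e1]
    linear_combination a ((i : ℕ) - (j : ℕ) - t) * b t * hcc'
  · have hz : ((i : ℕ).choose (j : ℕ) : ℝ) = 0 := by
      rw [Nat.choose_eq_zero_of_lt hij]; simp
    rw [hz, zero_mul]
    refine Finset.sum_eq_zero fun k hk => ?_
    rcases le_or_gt k (i : ℕ) with h | h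
    · rw [Nat.choose_eq_zero_of_lt (lt_of_le_of_lt h hij)]; simp
    · rw [Nat.choose_eq_zero_of_lt h]; simp

lemma tmatAux_mul (n : ℕ) (a b : ℕ → ℝ) :
    tmatAux n a * tmatAux n b
      = tmatAux n (fun s => ∑ t ∈ range (s + 1), a (s - t) * b t) := by
  ext i j
  simp only [Matrix.mul_apply, tmatAux, Matrix.of_apply]
  rw [Fin.sum_univ_eq_sum_range
    (fun k => (if k ≤ (i : ℕ) then a ((i : ℕ) - k) else 0) *
      (if (j : ℕ) ≤ k then b (k - (j : ℕ)) else 0))]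
  rcases le_or_gt (j : ℕ) (i : ℕ) with hji | hij
  · rw [if_pos hji]
    have h1 : ∑ k ∈ range (n + 1),
        (if k ≤ (i : ℕ) then a ((i : ℕ) - k) else 0) *
          (if (j : ℕ) ≤ k then b (k - (j : ℕ)) else 0)
        = ∑ k ∈ Ico (j : ℕ) ((i : ℕ) + 1),
        (if k ≤ (i : ℕ) then a ((i : ℕ) - k) else 0) *
          (if (j : ℕ) ≤ k then b (k - (j : ℕ)) else 0) := by
      refine (Finset.sum_subset ?_ ?_).symm
      · intro k hk; simp only [mem_Ico] at hk; simp only [mem_range]; omega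
      · intro k hk hk'
        simp only [mem_Ico, not_and, not_lt] at hk'
        rcases le_or_gt k (i : ℕ) with h | h
        · have hkj : k < (j : ℕ) := by
            by_contra h'
            exact absurd (hk' (le_of_not_gt h')) (by omega)
          have : ¬ (j : ℕ) ≤ k := by omega
          simp [this]
        · have : ¬ k ≤ (i : ℕ) := by omega
          simp [this]
    rw [h1, Finset.sum_Ico_eq_sum_range]
    have h2 : (i : ℕ) + 1 - (j : ℕ) = (i : ℕ) - (j : ℕ) + 1 := by omega
    rw [h2]
    refine Finset.sum_congr rfl fun t ht => ?_
    have ht' : t ≤ (i : ℕ) - (j : ℕ) := by simp only [mem_range] at ht; omega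
    rw [if_pos (by omega), if_pos (by omega)]
    have e1 : (j : ℕ) + t - (j : ℕ) = t := by omega
    have e2 : (i : ℕ) - ((j : ℕ) + t) = (i : ℕ) - (j : ℕ) - t := by omega
    rw [e1, e2]
  · have hji' : ¬ (j : ℕ) ≤ (i : ℕ) := by omega
    rw [if_neg hji']
    refine Finset.sum_eq_zero fun k hk => ?_
    rcases le_or_gt k (i : ℕ) with h | h
    · have : ¬ (j : ℕ) ≤ k := by omega
      simp [this]
    · have : ¬ k ≤ (i : ℕ) := by omega
      simp [this]

lemma bmatAux_one (n : ℕ) :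
    bmatAux n (fun s => if s = 0 then (1 : ℝ) else 0) = 1 := by
  ext i j
  simp only [bmatAux, Matrix.of_apply, Matrix.one_apply]
  rcases eq_or_ne i j with h | h
  · subst h; simp
  · rw [if_neg h]
    rcases lt_or_ge (i : ℕ) (j : ℕ) with hlt | hle
    · rw [Nat.choose_eq_zero_of_lt hlt]; simp
    · have : (i : ℕ) - (j : ℕ) ≠ 0 := by
        have : (i : ℕ) ≠ (j : ℕ) := fun hc => h (Fin.ext hc)
        omega
      rw [if_neg this]; simp

lemma tmatAux_one (n : ℕ) :
    tmatAux n (fun s => if s = 0 then (1 : ℝ) else 0) = 1 := by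
  ext i j
  simp only [tmatAux, Matrix.of_apply, Matrix.one_apply]
  rcases eq_or_ne i j with h | h
  · subst h; simp
  · have hne : (i : ℕ) ≠ (j : ℕ) := fun hc => h (Fin.ext hc)
    rw [if_neg h]
    rcases le_or_gt (j : ℕ) (i : ℕ) with hle | hlt
    · have h3 : (i : ℕ) - (j : ℕ) ≠ 0 := by omega
      simp [hle, h3]
    · have h3 : ¬ (j : ℕ) ≤ (i : ℕ) := by omega
      simp [h3]
def lseqAux : ℕ → ℝ := fun t => if t = 0 then 1 else if t ≤ 2 then -1 else 0

lemma eulerMatrix_eq_bmat (Eu : ℝ → ℕ → ℝ) (n : ℕ) (y : ℝ) :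
    eulerMatrix Eu n y = bmatAux n (Eu y) := rfl

lemma pascalMatrix_eq_bmat (n : ℕ) (x : ℝ) :
    pascalMatrix n x = bmatAux n (fun m => x ^ m) := rfl

lemma fibMatrix_eq_tmat (n : ℕ) :
    fibMatrix n = tmatAux n (fun m => (Nat.fib (m + 1) : ℝ)) := rfl

lemma Dmatrix_eq_bmat (n : ℕ) :
    Dmatrix n = bmatAux n (fun m => (((1 : ℝ) / 2) ^ m + (-(1 : ℝ) / 2) ^ m) / 2) := by
  ext i j
  simp only [Dmatrix, bmatAux, Matrix.of_apply]
  rcases le_or_gt (j : ℕ) (i : ℕ) with hji | hij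
  · set m := (i : ℕ) - (j : ℕ) with hm
    have e1 : (i : ℤ) - (j : ℤ) = (m : ℤ) := by omega
    have e2 : (j : ℤ) - (i : ℤ) - 1 = -(((m + 1 : ℕ)) : ℤ) := by push_cast; omega
    rw [e1, e2, zpow_neg, zpow_natCast, zpow_natCast]
    have h2 : (2 : ℝ) ^ (m + 1) ≠ 0 := by positivity
    have h3 : (-(1 : ℝ) / 2) ^ m = (-1) ^ m * (1 / 2) ^ m := by
      rw [neg_div, neg_pow]
    rw [h3]
    have h4 : ((1 : ℝ) / 2) ^ m = ((2 : ℝ) ^ m)⁻¹ := by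
      rw [one_div, inv_pow]
    rw [h4]
    have h5 : (2 : ℝ) ^ m ≠ 0 := by positivity
    field_simp
    ring
  · rw [Nat.choose_eq_zero_of_lt hij]
    simp

lemma fib_mul_lseq (n : ℕ) :
    fibMatrix n * tmatAux n lseqAux = 1 := by
  rw [fibMatrix_eq_tmat, tmatAux_mul]
  have hseq : ∀ s : ℕ, ∑ t ∈ Finset.range (s + 1), (Nat.fib (s - t + 1) : ℝ) * lseqAux t
      = if s = 0 then (1 : ℝ) else 0 := by
    intro s
    rcases s with _ | s
    · simp [lseqAux]
    rcases s with _ | m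
    · norm_num [Finset.sum_range_succ, lseqAux, Nat.fib]
    · have h1 : ∑ t ∈ Finset.range (m + 2 + 1), (Nat.fib (m + 2 - t + 1) : ℝ) * lseqAux t
          = ∑ t ∈ Finset.range 3, (Nat.fib (m + 2 - t + 1) : ℝ) * lseqAux t := by
        refine (Finset.sum_subset ?_ ?_).symm
        · intro t ht; simp only [Finset.mem_range] at *; omega
        · intro t ht ht'
          simp only [Finset.mem_range] at ht ht'
          have : lseqAux t = 0 := by
            simp only [lseqAux]
            rw [if_neg (by omega), if_neg (by omega)]
          rw [this, mul_zero]
      rw [h1]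
      have e0 : m + 2 - 0 + 1 = m + 3 := by omega
      have e1 : m + 2 - 1 + 1 = m + 2 := by omega
      have e2 : m + 2 - 2 + 1 = m + 1 := by omega
      rw [Finset.sum_range_succ, Finset.sum_range_succ, Finset.sum_range_one, e0, e1, e2]
      have hfib : Nat.fib (m + 3) = Nat.fib (m + 1) + Nat.fib (m + 2) := Nat.fib_add_two
      simp only [lseqAux]
      norm_num [hfib]
  rw [show (fun s : ℕ => ∑ t ∈ Finset.range (s + 1), (Nat.fib (s - t + 1) : ℝ) * lseqAux t)
      = fun s : ℕ => if s = 0 then (1 : ℝ) else 0 from funext hseq, tmatAux_one]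
lemma Mmatrix_eq (Eu : ℝ → ℕ → ℝ) (n : ℕ) (x : ℝ) :
    Mmatrix Eu n x = tmatAux n lseqAux * eulerMatrix Eu n x := by
  ext i j
  simp only [Mmatrix, Matrix.mul_apply, tmatAux, eulerMatrix, Matrix.of_apply]
  rw [Fin.sum_univ_eq_sum_range
    (fun k => (if k ≤ (i : ℕ) then lseqAux ((i : ℕ) - k) else 0) *
      ((k.choose (j : ℕ) : ℝ) * Eu x (k - (j : ℕ))))]
  have hin : (i : ℕ) ≤ n := by omega
  have h1 : ∑ k ∈ Finset.range (n + 1),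
      (if k ≤ (i : ℕ) then lseqAux ((i : ℕ) - k) else 0) *
        ((k.choose (j : ℕ) : ℝ) * Eu x (k - (j : ℕ)))
      = ∑ k ∈ Finset.Icc ((i : ℕ) - 2) (i : ℕ),
      (if k ≤ (i : ℕ) then lseqAux ((i : ℕ) - k) else 0) *
        ((k.choose (j : ℕ) : ℝ) * Eu x (k - (j : ℕ))) := by
    refine (Finset.sum_subset ?_ ?_).symm
    · intro k hk; simp only [Finset.mem_Icc] at hk; simp only [Finset.mem_range]; omega
    · intro k hk hk'
      simp only [Finset.mem_Icc, not_and, not_le] at hk'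
      rcases le_or_gt k (i : ℕ) with h | h
      · have h3 : 3 ≤ (i : ℕ) - k := by
          rcases le_or_gt ((i : ℕ) - 2) k with h' | h'
          · exact absurd (hk' h') (by omega)
          · omega
        have : lseqAux ((i : ℕ) - k) = 0 := by
          simp only [lseqAux]; rw [if_neg (by omega), if_neg (by omega)]
        simp [this]
      · have : ¬ k ≤ (i : ℕ) := by omega
        simp [this]
  rw [h1]
  rcases Nat.lt_or_ge (i : ℕ) 2 with hi2 | hi2
  · rcases Nat.lt_or_ge (i : ℕ) 1 with hi1 | hi1
    · -- i = 0
      have hi0 : (i : ℕ) = 0 := by omega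
      rw [hi0]
      simp [lseqAux]
    · -- i = 1
      have hi1' : (i : ℕ) = 1 := by omega
      rw [hi1']
      rw [show (1 : ℕ) - 2 = 0 from rfl]
      rw [show Finset.Icc 0 1 = {0, 1} from rfl]
      rw [Finset.sum_insert (by simp), Finset.sum_singleton]
      simp only [lseqAux]
      norm_num
      ring
  · -- i ≥ 2
    obtain ⟨m, hm⟩ : ∃ m, (i : ℕ) = m + 2 := ⟨(i : ℕ) - 2, by omega⟩
    rw [hm]
    rw [show m + 2 - 2 = m from by omega]
    rw [Finset.sum_Icc_succ_top (by omega), Finset.sum_Icc_succ_top (by omega),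
      Finset.Icc_self, Finset.sum_singleton]
    have e0 : m + 2 - m = 2 := by omega
    have e1 : m + 2 - (m + 1) = 1 := by omega
    have e2 : m + 2 - (m + 2) = 0 := by omega
    rw [e0, e1, e2]
    simp only [lseqAux, if_pos rfl, if_neg (by norm_num : ¬ (2 : ℕ) = 0),
      if_pos (le_refl 2), if_neg (by norm_num : ¬ (1 : ℕ) = 0),
      if_pos (by norm_num : (1 : ℕ) ≤ 2)]
    rw [if_pos (by omega : m ≤ m + 2), if_pos (by omega : m + 1 ≤ m + 2),
      if_pos (le_refl (m + 2)), if_pos (by omega : 1 ≤ m + 2), if_pos (by omega : 2 ≤ m + 2)]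
    have e3 : m + 2 - 1 = m + 1 := by omega
    rw [e3]
    norm_num
    ring

lemma Nmatrix_eq (Eu : ℝ → ℕ → ℝ) (n : ℕ) (x : ℝ) :
    Nmatrix Eu n x = eulerMatrix Eu n x * tmatAux n lseqAux := by
  ext i j
  simp only [Nmatrix, Matrix.mul_apply, tmatAux, eulerMatrix, Matrix.of_apply]
  rw [Fin.sum_univ_eq_sum_range
    (fun k => ((i : ℕ).choose k : ℝ) * Eu x ((i : ℕ) - k) *
      (if (j : ℕ) ≤ k then lseqAux (k - (j : ℕ)) else 0))]
  have hin : (i : ℕ) ≤ n := by omega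
  have hjn : (j : ℕ) ≤ n := by omega
  have h0 : ∑ k ∈ Finset.range (n + 1),
      ((i : ℕ).choose k : ℝ) * Eu x ((i : ℕ) - k) *
        (if (j : ℕ) ≤ k then lseqAux (k - (j : ℕ)) else 0)
      = ∑ k ∈ Finset.range (n + 3),
      ((i : ℕ).choose k : ℝ) * Eu x ((i : ℕ) - k) *
        (if (j : ℕ) ≤ k then lseqAux (k - (j : ℕ)) else 0) := by
    refine Finset.sum_subset ?_ ?_
    · intro k hk; simp only [Finset.mem_range] at *; omega
    · intro k hk hk'
      simp only [Finset.mem_range] at hk hk'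
      rw [Nat.choose_eq_zero_of_lt (by omega)]
      simp
  rw [h0]
  have h1 : ∑ k ∈ Finset.range (n + 3),
      ((i : ℕ).choose k : ℝ) * Eu x ((i : ℕ) - k) *
        (if (j : ℕ) ≤ k then lseqAux (k - (j : ℕ)) else 0)
      = ∑ k ∈ Finset.Icc (j : ℕ) ((j : ℕ) + 2),
      ((i : ℕ).choose k : ℝ) * Eu x ((i : ℕ) - k) *
        (if (j : ℕ) ≤ k then lseqAux (k - (j : ℕ)) else 0) := by
    refine (Finset.sum_subset ?_ ?_).symm
    · intro k hk; simp only [Finset.mem_Icc] at hk; simp only [Finset.mem_range]; omega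
    · intro k hk hk'
      simp only [Finset.mem_Icc, not_and, not_le] at hk'
      rcases le_or_gt (j : ℕ) k with h | h
      · have h3 : 3 ≤ k - (j : ℕ) := by
          have := hk' h; omega
        have : lseqAux (k - (j : ℕ)) = 0 := by
          simp only [lseqAux]; rw [if_neg (by omega), if_neg (by omega)]
        rw [if_pos h, this, mul_zero]
      · rw [if_neg (by omega)]; simp
  rw [h1]
  rw [Finset.sum_Icc_succ_top (by omega), Finset.sum_Icc_succ_top (by omega),
    Finset.Icc_self, Finset.sum_singleton]
  rw [if_pos (le_refl (j : ℕ)), if_pos (by omega : (j : ℕ) ≤ (j : ℕ) + 1),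
    if_pos (by omega : (j : ℕ) ≤ (j : ℕ) + 2)]
  have e0 : (j : ℕ) - (j : ℕ) = 0 := by omega
  have e1 : (j : ℕ) + 1 - (j : ℕ) = 1 := by omega
  have e2 : (j : ℕ) + 2 - (j : ℕ) = 2 := by omega
  rw [e0, e1, e2]
  simp only [lseqAux, if_pos rfl, if_neg (by norm_num : ¬ (1 : ℕ) = 0),
    if_pos (by norm_num : (1 : ℕ) ≤ 2), if_neg (by norm_num : ¬ (2 : ℕ) = 0),
    if_pos (le_refl 2)]
  norm_num
  ring
lemma coeff_unique_aux {c d : ℕ → ℝ} {F : ℝ → ℝ}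
    (hc : ∀ z : ℝ, |z| < Real.pi → HasSum (fun m => c m * z ^ m) (F z))
    (hd : ∀ z : ℝ, |z| < Real.pi → HasSum (fun m => d m * z ^ m) (F z)) : c = d := by
  have hpi1 : (1 : ℝ) < Real.pi := by linarith [Real.pi_gt_three]
  have habs1 : |(1 : ℝ)| < Real.pi := by rw [abs_one]; exact hpi1
  have key : ∀ (e : ℕ → ℝ), (∀ z : ℝ, |z| < Real.pi → HasSum (fun m => e m * z ^ m) (F z)) →
      HasFPowerSeriesAt F (FormalMultilinearSeries.ofScalars ℝ e) 0 := by
    intro e he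
    refine ⟨1, ?_, one_pos, ?_⟩
    · -- radius
      apply FormalMultilinearSeries.le_radius_of_summable_norm
      have hs : Summable (fun m => e m) := by
        have := (he 1 habs1).summable
        simpa using this
      have hs' : Summable (fun m => ‖e m‖) := by
        rwa [summable_norm_iff]
      apply Summable.congr hs'
      intro m
      rw [FormalMultilinearSeries.ofScalars_norm]
      simp
    · intro z hz
      rw [EMetric.mem_ball, edist_dist, dist_zero_right, Real.norm_eq_abs] at hz
      have hz1 : |z| < 1 := ENNReal.ofReal_lt_one.mp hz
      have := he z (hz1.trans hpi1)
      simp only [zero_add]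
      convert this using 1
      · rfl
      funext m
      rw [FormalMultilinearSeries.ofScalars_apply_eq]
      simp [mul_comm]
  have h1 := key c hc
  have h2 := key d hd
  have := h1.eq_formalMultilinearSeries h2
  exact FormalMultilinearSeries.ofScalars_series_injective (𝕜 := ℝ) ℝ this
lemma eulerConv_aux (Eu : ℝ → ℕ → ℝ) (hEu : IsEulerFamily Eu) (y : ℝ) (s : ℕ) :
    ∑ t ∈ Finset.range (s + 1),
        (Nat.choose s t : ℝ) * Eu y (s - t) * (((1 - y) ^ t + (-y) ^ t) / 2)
      = if s = 0 then (1 : ℝ) else 0 := by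
  set q : ℕ → ℝ := fun t => ((1 - y) ^ t + (-y) ^ t) / 2 with hq
  set c : ℕ → ℝ := fun m => ∑ k ∈ Finset.range (m + 1),
      (Eu y k / (Nat.factorial k : ℝ)) * (q (m - k) / (Nat.factorial (m - k) : ℝ)) with hcdef
  have hc : ∀ z : ℝ, |z| < Real.pi → HasSum (fun m => c m * z ^ m) ((fun _ => (1 : ℝ)) z) := by
    intro z hz
    have hA := hEu y z hz
    have h1 := NormedSpace.expSeries_div_hasSum_exp ((1 - y) * z)
    have h2 := NormedSpace.expSeries_div_hasSum_exp ((-y) * z)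
    rw [← Real.exp_eq_exp_ℝ] at h1 h2
    have hB : HasSum (fun t => q t * z ^ t / (Nat.factorial t : ℝ))
        ((Real.exp ((1 - y) * z) + Real.exp ((-y) * z)) / 2) := by
      have h3 := (h1.add h2).div_const 2
      convert h3 using 1
      · rfl
      funext t
      simp only [hq]
      rw [mul_pow, mul_pow]
      ring
    have hf' : Summable (fun m => ‖Eu y m * z ^ m / (Nat.factorial m : ℝ)‖) :=
      summable_norm_iff.mpr hA.summable
    have hg' : Summable (fun t => ‖q t * z ^ t / (Nat.factorial t : ℝ)‖) :=
      summable_norm_iff.mpr hB.summable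
    have hC := hasSum_sum_range_mul_of_summable_norm hf' hg'
    rw [hA.tsum_eq, hB.tsum_eq] at hC
    have hne : Real.exp z + 1 ≠ 0 := by positivity
    have e1 : Real.exp (y * z) * Real.exp ((1 - y) * z) = Real.exp z := by
      rw [← Real.exp_add]; congr 1; ring
    have e2 : Real.exp (y * z) * Real.exp ((-y) * z) = 1 := by
      rw [← Real.exp_add, show y * z + (-y) * z = 0 from by ring, Real.exp_zero]
    have hprod : 2 / (Real.exp z + 1) * Real.exp (y * z) *
        ((Real.exp ((1 - y) * z) + Real.exp ((-y) * z)) / 2) = 1 := by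
      calc 2 / (Real.exp z + 1) * Real.exp (y * z) *
            ((Real.exp ((1 - y) * z) + Real.exp ((-y) * z)) / 2)
          = (Real.exp (y * z) * Real.exp ((1 - y) * z)
              + Real.exp (y * z) * Real.exp ((-y) * z)) / (Real.exp z + 1) := by
            field_simp
        _ = 1 := by rw [e1, e2]; exact div_self hne
    rw [hprod] at hC
    convert hC using 1
    · rfl
    funext m
    rw [hcdef]
    rw [Finset.sum_mul]
    refine Finset.sum_congr rfl fun k hk => ?_
    have hk' : k ≤ m := Finset.mem_range_succ_iff.mp hk
    have hzz : z ^ m = z ^ k * z ^ (m - k) := by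
      rw [← pow_add, Nat.add_sub_cancel' hk']
    rw [hzz]
    ring
  have hd : ∀ z : ℝ, |z| < Real.pi →
      HasSum (fun m => (if m = 0 then (1 : ℝ) else 0) * z ^ m) ((fun _ => (1 : ℝ)) z) := by
    intro z _
    have he : (fun m => (if m = 0 then (1 : ℝ) else 0) * z ^ m)
        = fun m => if m = 0 then (1 : ℝ) else 0 := by
      funext m
      split <;> simp_all
    rw [he]
    exact hasSum_ite_eq 0 1
  have hcd : c = fun m => if m = 0 then (1 : ℝ) else 0 := coeff_unique_aux hc hd
  have hcs : c s = if s = 0 then (1 : ℝ) else 0 := congrFun hcd s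
  have hrefl : ∑ t ∈ Finset.range (s + 1),
      (Nat.choose s t : ℝ) * Eu y (s - t) * q t
      = ∑ k ∈ Finset.range (s + 1), (Nat.choose s k : ℝ) * Eu y k * q (s - k) := by
    rw [← Finset.sum_range_reflect (fun k => (Nat.choose s k : ℝ) * Eu y k * q (s - k)) (s + 1)]
    refine Finset.sum_congr rfl fun t ht => ?_
    have ht' : t ≤ s := Finset.mem_range_succ_iff.mp ht
    have e3 : s + 1 - 1 - t = s - t := by omega
    have e4 : s - (s - t) = t := by omega
    rw [e3, e4, Nat.choose_symm ht']
  have hsum : ∑ k ∈ Finset.range (s + 1), (Nat.choose s k : ℝ) * Eu y k * q (s - k)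
      = c s * (Nat.factorial s : ℝ) := by
    rw [hcdef, Finset.sum_mul]
    refine Finset.sum_congr rfl fun k hk => ?_
    have hk' : k ≤ s := Finset.mem_range_succ_iff.mp hk
    rw [Nat.cast_choose ℝ hk']
    have f1 : (Nat.factorial k : ℝ) ≠ 0 := Nat.cast_ne_zero.mpr (Nat.factorial_ne_zero k)
    have f2 : (Nat.factorial (s - k) : ℝ) ≠ 0 := Nat.cast_ne_zero.mpr (Nat.factorial_ne_zero _)
    field_simp
  rw [hrefl, hsum, hcs]
  rcases eq_or_ne s 0 with h | h
  · subst h; simp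
  · simp [h]
lemma euler_inv_aux (Eu : ℝ → ℕ → ℝ) (hEu : IsEulerFamily Eu) (n : ℕ) (y : ℝ) :
    eulerMatrix Eu n y * bmatAux n (fun m => ((1 - y) ^ m + (-y) ^ m) / 2) = 1 := by
  rw [eulerMatrix_eq_bmat, bmatAux_mul]
  rw [show (fun s => ∑ t ∈ Finset.range (s + 1), (Nat.choose s t : ℝ) * Eu y (s - t) *
        (((1 - y) ^ t + (-y) ^ t) / 2))
      = fun s : ℕ => if s = 0 then (1 : ℝ) else 0 from funext (eulerConv_aux Eu hEu y),
    bmatAux_one]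

lemma DP_aux (n : ℕ) (x : ℝ) :
    Dmatrix n * pascalMatrix n x
      = bmatAux n (fun m => ((x + 1 / 2) ^ m + (x + -(1 / 2)) ^ m) / 2) := by
  rw [Dmatrix_eq_bmat, pascalMatrix_eq_bmat, bmatAux_mul]
  refine congrArg (bmatAux n) (funext fun s => ?_)
  rw [add_pow, add_pow, ← Finset.sum_add_distrib, Finset.sum_div]
  refine Finset.sum_congr rfl fun t ht => ?_
  rw [show (-(1 / 2) : ℝ) ^ (s - t) = (-(1 : ℝ) / 2) ^ (s - t) from by norm_num]
  ring

lemma pascal_zero_aux (n : ℕ) : pascalMatrix n 0 = 1 := by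
  ext i j
  simp only [pascalMatrix, Matrix.of_apply, Matrix.one_apply]
  rcases eq_or_ne i j with h | h
  · subst h; simp
  · rw [if_neg h]
    rcases lt_or_ge (i : ℕ) (j : ℕ) with hlt | hle
    · rw [Nat.choose_eq_zero_of_lt hlt]; simp
    · have hne : (i : ℕ) ≠ (j : ℕ) := fun hc => h (Fin.ext hc)
      have : (i : ℕ) - (j : ℕ) ≠ 0 := by omega
      rw [zero_pow this, mul_zero]

lemma masterM_aux (Eu : ℝ → ℕ → ℝ) (hEu : IsEulerFamily Eu) (n : ℕ) (x : ℝ) :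
    Mmatrix Eu n (x + 1 / 2) * (Dmatrix n * pascalMatrix n (-x) * fibMatrix n) = 1 := by
  have hq : (fun m : ℕ => (((-x : ℝ) + 1 / 2) ^ m + ((-x) + -(1 / 2)) ^ m) / 2)
      = fun m : ℕ => ((1 - (x + 1 / 2)) ^ m + (-(x + 1 / 2)) ^ m) / 2 := by
    funext m
    rw [show (-x : ℝ) + 1 / 2 = 1 - (x + 1 / 2) from by ring,
      show (-x : ℝ) + -(1 / 2) = -(x + 1 / 2) from by ring]
  have hED : eulerMatrix Eu n (x + 1 / 2) * (Dmatrix n * pascalMatrix n (-x)) = 1 := by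
    rw [DP_aux, hq, euler_inv_aux Eu hEu]
  have hLF : tmatAux n lseqAux * fibMatrix n = 1 :=
    mul_eq_one_comm.mp (fib_mul_lseq n)
  rw [Mmatrix_eq]
  calc tmatAux n lseqAux * eulerMatrix Eu n (x + 1 / 2) *
        (Dmatrix n * pascalMatrix n (-x) * fibMatrix n)
      = tmatAux n lseqAux *
        ((eulerMatrix Eu n (x + 1 / 2) * (Dmatrix n * pascalMatrix n (-x))) * fibMatrix n) := by
        simp only [Matrix.mul_assoc]
    _ = tmatAux n lseqAux * fibMatrix n := by rw [hED, Matrix.one_mul]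
    _ = 1 := hLF

lemma masterN_aux (Eu : ℝ → ℕ → ℝ) (hEu : IsEulerFamily Eu) (n : ℕ) (x : ℝ) :
    Nmatrix Eu n (x + 1 / 2) * (fibMatrix n * Dmatrix n * pascalMatrix n (-x)) = 1 := by
  have hq : (fun m : ℕ => (((-x : ℝ) + 1 / 2) ^ m + ((-x) + -(1 / 2)) ^ m) / 2)
      = fun m : ℕ => ((1 - (x + 1 / 2)) ^ m + (-(x + 1 / 2)) ^ m) / 2 := by
    funext m
    rw [show (-x : ℝ) + 1 / 2 = 1 - (x + 1 / 2) from by ring,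
      show (-x : ℝ) + -(1 / 2) = -(x + 1 / 2) from by ring]
  have hED : eulerMatrix Eu n (x + 1 / 2) * (Dmatrix n * pascalMatrix n (-x)) = 1 := by
    rw [DP_aux, hq, euler_inv_aux Eu hEu]
  have hLF : tmatAux n lseqAux * fibMatrix n = 1 :=
    mul_eq_one_comm.mp (fib_mul_lseq n)
  rw [Nmatrix_eq]
  calc eulerMatrix Eu n (x + 1 / 2) * tmatAux n lseqAux *
        (fibMatrix n * Dmatrix n * pascalMatrix n (-x))
      = eulerMatrix Eu n (x + 1 / 2) *
        ((tmatAux n lseqAux * fibMatrix n) * (Dmatrix n * pascalMatrix n (-x))) := by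
        simp only [Matrix.mul_assoc]
    _ = eulerMatrix Eu n (x + 1 / 2) * (Dmatrix n * pascalMatrix n (-x)) := by
        rw [hLF, Matrix.one_mul]
    _ = 1 := hED

theorem MN_matrix_inverse (Eu : ℝ → ℕ → ℝ) (hEu : IsEulerFamily Eu) (n : ℕ) (x : ℝ) :
    (Mmatrix Eu n (x + 1 / 2) * (Dmatrix n * pascalMatrix n (-x) * fibMatrix n) = 1 ∧
     (Dmatrix n * pascalMatrix n (-x) * fibMatrix n) * Mmatrix Eu n (x + 1 / 2) = 1) ∧
    (Nmatrix Eu n (x + 1 / 2) * (fibMatrix n * Dmatrix n * pascalMatrix n (-x)) = 1 ∧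
     (fibMatrix n * Dmatrix n * pascalMatrix n (-x)) * Nmatrix Eu n (x + 1 / 2) = 1) ∧
    (Mmatrix Eu n 0 * (Dmatrix n * pascalMatrix n (1 / 2) * fibMatrix n) = 1 ∧
     (Dmatrix n * pascalMatrix n (1 / 2) * fibMatrix n) * Mmatrix Eu n 0 = 1) ∧
    (Nmatrix Eu n 0 * (fibMatrix n * Dmatrix n * pascalMatrix n (1 / 2)) = 1 ∧
     (fibMatrix n * Dmatrix n * pascalMatrix n (1 / 2)) * Nmatrix Eu n 0 = 1) ∧
    (Mmatrix Eu n (1 / 2) * (Dmatrix n * fibMatrix n) = 1 ∧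
     (Dmatrix n * fibMatrix n) * Mmatrix Eu n (1 / 2) = 1) ∧
    (Nmatrix Eu n (1 / 2) * (fibMatrix n * Dmatrix n) = 1 ∧
     (fibMatrix n * Dmatrix n) * Nmatrix Eu n (1 / 2) = 1) := by
  have hM0 : Mmatrix Eu n 0 * (Dmatrix n * pascalMatrix n (1 / 2) * fibMatrix n) = 1 := by
    have h := masterM_aux Eu hEu n (-(1 / 2))
    rw [show (-(1 / 2 : ℝ) + 1 / 2) = 0 from by norm_num,
      show (-(-(1 / 2 : ℝ))) = 1 / 2 from by norm_num] at h
    exact h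
  have hN0 : Nmatrix Eu n 0 * (fibMatrix n * Dmatrix n * pascalMatrix n (1 / 2)) = 1 := by
    have h := masterN_aux Eu hEu n (-(1 / 2))
    rw [show (-(1 / 2 : ℝ) + 1 / 2) = 0 from by norm_num,
      show (-(-(1 / 2 : ℝ))) = 1 / 2 from by norm_num] at h
    exact h
  have hMh : Mmatrix Eu n (1 / 2) * (Dmatrix n * fibMatrix n) = 1 := by
    have h := masterM_aux Eu hEu n 0
    rw [show ((0 : ℝ) + 1 / 2) = 1 / 2 from by norm_num, neg_zero, pascal_zero_aux,
      Matrix.mul_one] at h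
    exact h
  have hNh : Nmatrix Eu n (1 / 2) * (fibMatrix n * Dmatrix n) = 1 := by
    have h := masterN_aux Eu hEu n 0
    rw [show ((0 : ℝ) + 1 / 2) = 1 / 2 from by norm_num, neg_zero] at h
    calc Nmatrix Eu n (1 / 2) * (fibMatrix n * Dmatrix n)
        = Nmatrix Eu n (1 / 2) * (fibMatrix n * Dmatrix n * pascalMatrix n 0) := by
          rw [pascal_zero_aux, Matrix.mul_one]
      _ = 1 := h
  exact ⟨⟨masterM_aux Eu hEu n x, mul_eq_one_comm.mp (masterM_aux Eu hEu n x)⟩,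
    ⟨masterN_aux Eu hEu n x, mul_eq_one_comm.mp (masterN_aux Eu hEu n x)⟩,
    ⟨hM0, mul_eq_one_comm.mp hM0⟩,
    ⟨hN0, mul_eq_one_comm.mp hN0⟩,
    ⟨hMh, mul_eq_one_comm.mp hMh⟩,
    ⟨hNh, mul_eq_one_comm.mp hNh⟩⟩
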